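/- If τ = 1, then n = 2 and ω = 2. -/

import Mathlib

open Module

/-- The endomorphism `F - 1` of `N`. -/
def frobSub {N : Type*} [AddCommGroup N] (F : AddAut N) : N →+ N :=
  AddEquiv.toAddMonoidHom (F : N ≃+ N) - AddMonoidHom.id N

/-- The invariants `N^F = ker (F - 1)`. -/
def invariantsOf {N : Type*} [AddCommGroup N] (F : AddAut N) : AddSubgroup N :=
  (frobSub F).ker

/-- The coinvariants `N_F = N / im (F - 1)`. -/
abbrev coinvariantsOf {N : Type*} [AddCommGroup N] (F : AddAut N) :=
  N ⧸ (frobSub F).range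

/-- The map `β : N^F → N_F` induced by the identity of `N`. -/
def betaHom {N : Type*} [AddCommGroup N] (F : AddAut N) :
    ↥(invariantsOf F) →+ coinvariantsOf F :=
  (QuotientAddGroup.mk' (frobSub F).range).comp (invariantsOf F).subtype

/-- The cokernel of `β`. -/
abbrev betaCoker {N : Type*} [AddCommGroup N] (F : AddAut N) :=
  coinvariantsOf F ⧸ (betaHom F).range

/-- `ω = |coker β| / |ker β|`. -/
noncomputable def omegaOf {N : Type*} [AddCommGroup N] (F : AddAut N) : ℕ :=
  Nat.card (betaCoker F) / Nat.card ↥(betaHom F).ker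

/-- `τ = rank N - rank N^F`. -/
noncomputable def tauOf {N : Type*} [AddCommGroup N] (F : AddAut N) : ℕ :=
  Module.finrank ℤ N - Module.finrank ℤ ↥(invariantsOf F)

theorem frobSub_apply {N : Type*} [AddCommGroup N] (F : AddAut N) (x : N) :
    frobSub F x = F x - x := rfl

/-- If `τ = 1`, then `n = 2` and `ω = 2`. -/
theorem omega_of_tau_eq_one {N : Type*} [AddCommGroup N]
    [Module.Free ℤ N] [Module.Finite ℤ N]
    (F : AddAut N) (n : ℕ) (hn : 1 ≤ n) (hord : addOrderOf F = n)
    (hτ : tauOf F = 1) :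
    n = 2 ∧ omegaOf F = 2 := by
  classical
  set fl : N →ₗ[ℤ] N := (frobSub F).toIntLinearMap with hfl
  set K : Submodule ℤ N := LinearMap.ker fl with hKdef
  have hmemK : ∀ x : N, x ∈ K ↔ F x = x := by
    intro x
    rw [hKdef, LinearMap.mem_ker, hfl, AddMonoidHom.coe_toIntLinearMap, frobSub_apply,
      sub_eq_zero]
  have memInv : ∀ x : N, x ∈ invariantsOf F ↔ F x = x := by
    intro x
    rw [invariantsOf, AddMonoidHom.mem_ker, frobSub_apply, sub_eq_zero]
  -- the invariants agree with `K`
  let eInv : ↥(invariantsOf F) ≃+ ↥K :=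
    { toFun := fun x => ⟨x.1, (hmemK _).mpr ((memInv _).mp x.2)⟩
      invFun := fun x => ⟨x.1, (memInv _).mpr ((hmemK _).mp x.2)⟩
      left_inv := fun x => rfl
      right_inv := fun x => rfl
      map_add' := fun x y => rfl }
  have hfr : finrank ℤ ↥(invariantsOf F) = finrank ℤ ↥K :=
    eInv.toIntLinearEquiv.finrank_eq
  -- the quotient has rank 1
  have hQrank : finrank ℤ (N ⧸ K) = 1 := by
    rw [Submodule.finrank_quotient, ← hfr]
    exact hτ
  -- the quotient is torsion-free, hence free
  have hQtf : NoZeroSMulDivisors ℤ (N ⧸ K) := by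
    refine ⟨fun {c x} hcx => ?_⟩
    obtain ⟨y, rfl⟩ := Submodule.Quotient.mk_surjective K x
    rw [← Submodule.Quotient.mk_smul, Submodule.Quotient.mk_eq_zero, LinearMap.mem_ker,
      map_smul] at hcx
    rcases smul_eq_zero.mp hcx with h | h
    · exact Or.inl h
    · exact Or.inr (by rw [Submodule.Quotient.mk_eq_zero]; exact h)
  have hQfree : Module.Free ℤ (N ⧸ K) := Module.free_of_finite_type_torsion_free'
  -- an isomorphism of the quotient with ℤ
  let b1 : Basis (Fin 1) ℤ (N ⧸ K) := Module.finBasisOfFinrankEq ℤ (N ⧸ K) hQrank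
  let e : (N ⧸ K) ≃ₗ[ℤ] ℤ := b1.equivFun.trans (LinearEquiv.funUnique (Fin 1) ℤ ℤ)
  -- F cannot be the identity
  have contra : (∀ x : N, F x = x) → False := by
    intro hfix
    have hsub : ∀ q : N ⧸ K, q = 0 := by
      intro q
      obtain ⟨x, rfl⟩ := Submodule.Quotient.mk_surjective K q
      rw [Submodule.Quotient.mk_eq_zero]
      exact (hmemK x).mpr (hfix x)
    have h01 := hsub (e.symm 1)
    apply_fun e at h01
    simp only [LinearEquiv.apply_symm_apply, map_zero] at h01
    exact one_ne_zero h01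
  -- the induced automorphism of the quotient
  let Flin : N ≃ₗ[ℤ] N := AddEquiv.toIntLinearEquiv (F : N ≃+ N)
  have hFlin : ∀ x : N, Flin x = F x := fun x => rfl
  have hmap : Submodule.map (Flin : N →ₗ[ℤ] N) K = K := by
    apply le_antisymm
    · rintro x ⟨y, hy, rfl⟩
      have hyy := (hmemK y).mp hy
      simpa [hFlin, hyy] using hy
    · intro x hx
      exact ⟨x, hx, by rw [LinearEquiv.coe_coe, hFlin, (hmemK x).mp hx]⟩
  let Fbar : (N ⧸ K) ≃ₗ[ℤ] (N ⧸ K) := Submodule.Quotient.equiv K K Flin hmap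
  have hFbar_mk : ∀ x : N,
      Fbar (Submodule.Quotient.mk x) = Submodule.Quotient.mk (F x) := by
    intro x
    simp [Fbar, Submodule.Quotient.equiv, Submodule.mapQ_apply, hFlin]
  -- Fbar is multiplication by a unit c of ℤ
  let g : ℤ ≃ₗ[ℤ] ℤ := e.symm.trans (Fbar.trans e)
  set c : ℤ := g 1 with hc
  have hg : ∀ m : ℤ, g m = m * c := by
    intro m
    rw [hc, ← smul_eq_mul, ← map_smul, smul_eq_mul, mul_one]
  have hunit : IsUnit c := by
    obtain ⟨m, hm⟩ := g.surjective 1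
    rw [hg] at hm
    exact IsUnit.of_mul_eq_one (a := c) m (by rw [mul_comm]; exact hm)
  have hFbar_smul : ∀ q : N ⧸ K, Fbar q = c • q := by
    intro q
    apply e.injective
    have h1 : e (Fbar q) = g (e q) := by
      simp [g]
    rw [h1, hg, map_smul, smul_eq_mul, mul_comm]
  rcases Int.isUnit_iff.mp hunit with h1 | hm1
  · -- case c = 1 : F is unipotent, contradiction
    exfalso
    apply contra
    intro x
    have hmk : (Submodule.Quotient.mk (F x) : N ⧸ K) = Submodule.Quotient.mk x := by
      rw [← hFbar_mk, hFbar_smul, h1, one_smul]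
    have hyK : F x - x ∈ K := by
      rw [← Submodule.Quotient.mk_eq_zero, Submodule.Quotient.mk_sub, hmk, sub_self]
    have hy : F (F x - x) = F x - x := (hmemK _).mp hyK
    set y : N := F x - x with hydef
    have hFx : F x = x + y := by rw [hydef]; abel
    have hiter : ∀ k : ℕ, (k • F) x = x + k • y := by
      intro k
      induction k with
      | zero => simp
      | succ k ih =>
        rw [succ_nsmul' (a := F), AddAut.add_apply, ih, map_add, map_nsmul, hy, hFx, succ_nsmul]
        abel
    have hfin : (n • F) x = x := by
      rw [← hord, addOrderOf_nsmul_eq_zero F]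
      rfl
    rw [hiter n] at hfin
    have hny : n • y = 0 := by rwa [add_eq_left] at hfin
    have hnzy : (n : ℤ) • y = 0 := by rw [natCast_zsmul]; exact hny
    rcases smul_eq_zero.mp hnzy with h | h
    · exfalso; have hn0 : n = 0 := by exact_mod_cast h
      omega
    · rw [hFx, h, add_zero]
  · -- case c = -1
    have hFneg : ∀ x : N,
        (Submodule.Quotient.mk (F x) : N ⧸ K) = -Submodule.Quotient.mk x := by
      intro x
      rw [← hFbar_mk, hFbar_smul, hm1, neg_smul, one_smul]
    have h2 : ∀ x : N, F (F x) = x := by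
      intro x
      have hk : F x + x ∈ K := by
        rw [← Submodule.Quotient.mk_eq_zero, Submodule.Quotient.mk_add, hFneg x,
          neg_add_cancel]
      have h' := (hmemK _).mp hk
      rw [map_add] at h'
      have := h'
      -- F (F x) + F x = F x + x
      have h'' : F (F x) + F x = x + F x := by rw [this]; abel
      exact add_right_cancel h''
    have hF2 : 2 • F = 0 := by
      ext x
      rw [two_nsmul, AddAut.add_apply, h2 x]
      rfl
    have hne1 : n ≠ 1 := by
      intro h1
      rw [h1, AddMonoid.addOrderOf_eq_one_iff] at hord
      exact contra fun x => by rw [hord]; rfl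
    have hdvd : n ∣ 2 := hord ▸ addOrderOf_dvd_of_nsmul_eq_zero hF2
    have hn2 : n = 2 := by
      rcases (Nat.dvd_prime Nat.prime_two).mp hdvd with h | h
      · exact absurd h hne1
      · exact h
    refine ⟨hn2, ?_⟩
    -- kernel of β is trivial
    have hker : (betaHom F).ker = ⊥ := by
      ext x
      simp only [AddMonoidHom.mem_ker, AddSubgroup.mem_bot]
      constructor
      · intro hx
        have hxR : (x : N) ∈ (frobSub F).range := by
          rwa [betaHom, AddMonoidHom.comp_apply, AddSubgroup.coe_subtype,
            QuotientAddGroup.mk'_apply, QuotientAddGroup.eq_zero_iff] at hx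
        obtain ⟨y, hy⟩ := hxR
        have hFx : F (x : N) = x := (memInv _).mp x.2
        have hneg : F (x : N) = -(x : N) := by
          rw [← hy, frobSub_apply, map_sub, h2 y]
          abel
        have hzero : (x : N) + (x : N) = 0 := by
          nth_rewrite 1 [← hFx]
          rw [hneg, neg_add_cancel]
        have h2x : (2 : ℤ) • (x : N) = 0 := by
          rw [two_smul]; exact hzero
        rcases smul_eq_zero.mp h2x with h | h
        · norm_num at h
        · exact Subtype.ext h
      · rintro rfl
        simp
    have hkercard : Nat.card ↥(betaHom F).ker = 1 := by
      rw [hker]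
      simp
    -- the cokernel has cardinality 2
    let φ : N →+ ZMod 2 :=
      (Int.castAddHom (ZMod 2)).comp (e.toAddMonoidHom.comp (K.mkQ).toAddMonoidHom)
    have hφ_apply : ∀ x : N, φ x = ((e (Submodule.Quotient.mk x) : ℤ) : ZMod 2) := by
      intro x; rfl
    have hfy : ∀ y : N, (Submodule.Quotient.mk (frobSub F y) : N ⧸ K)
        = -((2 : ℤ) • Submodule.Quotient.mk y) := by
      intro y
      rw [frobSub_apply, Submodule.Quotient.mk_sub, hFneg y, two_smul]
      abel
    have hφsurj : Function.Surjective φ := by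
      intro z
      obtain ⟨m, rfl⟩ := ZMod.intCast_surjective z
      obtain ⟨y, hy⟩ := Submodule.Quotient.mk_surjective K (e.symm m)
      refine ⟨y, ?_⟩
      rw [hφ_apply, hy, LinearEquiv.apply_symm_apply]
    have hφker : φ.ker = (frobSub F).range ⊔ invariantsOf F := by
      apply le_antisymm
      · intro x hx
        rw [AddMonoidHom.mem_ker, hφ_apply] at hx
        have hdvd2 : (2 : ℤ) ∣ e (Submodule.Quotient.mk x) :=
          (ZMod.intCast_zmod_eq_zero_iff_dvd _ 2).mp hx
        obtain ⟨m, hm⟩ := hdvd2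
        obtain ⟨y, hy⟩ := Submodule.Quotient.mk_surjective K (e.symm m)
        have hmk : (Submodule.Quotient.mk (x + frobSub F y) : N ⧸ K) = 0 := by
          rw [Submodule.Quotient.mk_add, hfy y, hy]
          apply e.injective
          rw [map_add, map_neg, map_smul, LinearEquiv.apply_symm_apply, map_zero, hm]
          simp [smul_eq_mul]
        have hxmem : x + frobSub F y ∈ invariantsOf F :=
          (memInv _).mpr ((hmemK _).mp ((Submodule.Quotient.mk_eq_zero K).mp hmk))
        have hxeq : x = (x + frobSub F y) + (-(frobSub F y)) := by abel
        rw [hxeq]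
        exact add_mem (AddSubgroup.mem_sup_right hxmem)
          (AddSubgroup.mem_sup_left (neg_mem ⟨y, rfl⟩))
      · rw [sup_le_iff]
        constructor
        · rintro _ ⟨y, rfl⟩
          rw [AddMonoidHom.mem_ker, hφ_apply, hfy y]
          rw [map_neg, map_smul]
          push_cast
          ring_nf
          simp [ZMod.intCast_cast]
          exact Or.inr (by decide)
        · intro x hx
          rw [AddMonoidHom.mem_ker, hφ_apply]
          have : (Submodule.Quotient.mk x : N ⧸ K) = 0 :=
            (Submodule.Quotient.mk_eq_zero K).mpr ((hmemK x).mpr ((memInv x).mp hx))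
          rw [this, map_zero]
          rfl
    have hrange : (betaHom F).range
        = ((frobSub F).range ⊔ invariantsOf F).map (QuotientAddGroup.mk' (frobSub F).range) := by
      rw [betaHom, AddMonoidHom.range_comp, AddSubgroup.range_subtype,
        AddSubgroup.map_sup, QuotientAddGroup.map_mk'_self, bot_sup_eq]
    have hcoker : Nat.card (betaCoker F) = 2 := by
      show Nat.card (coinvariantsOf F ⧸ (betaHom F).range) = 2
      rw [hrange,
        Nat.card_congr (QuotientAddGroup.quotientQuotientEquivQuotient (frobSub F).range
          ((frobSub F).range ⊔ invariantsOf F) le_sup_left).toEquiv,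
        ← hφker,
        Nat.card_congr (QuotientAddGroup.quotientKerEquivOfSurjective φ hφsurj).toEquiv,
        Nat.card_zmod]
    unfold omegaOf
    rw [hcoker, hkercard]
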